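/- For every complex number x with |x| < 1, one has (1 - x) · ∏_{m=1}^∞ (1 - x^{2m})(1 + x^{2m-1})² = Σ_{n=0}^∞ x^{n²}(1 - x^{2n+2})², where the infinite product is convergent (multipliable) and the series is absolutely convergent. -/

import Mathlib

open Finset Filter Topology
namespace Ferm
variable {x : ℂ}

theorem fac_ne (hx : ‖x‖ < 1) (j : ℕ) : (1 : ℂ) - x ^ (2*j+2) ≠ 0 := by
  have h : ‖x ^ (2*j+2)‖ < 1 := by
    rw [norm_pow]; exact pow_lt_one₀ (norm_nonneg x) hx (by omega)
  intro h0
  have : x ^ (2*j+2) = 1 := by linear_combination -h0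
  rw [this] at h; simp at h

variable (x) in
noncomputable def Ap (k : ℕ) : ℂ := ∏ j ∈ Finset.range k, (1 - x ^ (2*j+2))

variable (x) in
noncomputable def gb (n r : ℕ) : ℂ := if r ≤ n then Ap x n / (Ap x r * Ap x (n - r)) else 0

theorem Ap_ne (hx : ‖x‖ < 1) (k : ℕ) : Ap x k ≠ 0 :=
  Finset.prod_ne_zero_iff.2 fun j _ => fac_ne hx j

theorem Ap_zero : Ap x 0 = 1 := by simp [Ap]

theorem Ap_succ (k : ℕ) : Ap x (k+1) = Ap x k * (1 - x ^ (2*k+2)) :=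
  Finset.prod_range_succ _ _

theorem gb_self (hx : ‖x‖ < 1) (n : ℕ) : gb x n n = 1 := by
  simp [gb, Ap_zero, div_self (Ap_ne hx n)]

theorem gb_zero (hx : ‖x‖ < 1) (n : ℕ) : gb x n 0 = 1 := by
  simp [gb, Ap_zero, div_self (Ap_ne hx n)]

theorem gb_of_gt {n r : ℕ} (h : n < r) : gb x n r = 0 := by
  simp [gb, Nat.not_le.mpr h]

theorem P1 (hx : ‖x‖ < 1) (n r : ℕ) :
    gb x (n+1) (r+1) = gb x n (r+1) + x ^ (2*(n-r)) * gb x n r := by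
  rcases lt_or_ge n (r+1) with h | h
  · rcases eq_or_lt_of_le (Nat.lt_succ_iff.mp h) with rfl | h2
    · simp [gb_self hx, gb_of_gt (Nat.lt_succ_self n), Nat.sub_self]
    · rw [gb_of_gt h2, gb_of_gt (by omega : n < r + 1), gb_of_gt (by omega : n + 1 < r + 1)]
      ring
  · obtain ⟨d, rfl⟩ : ∃ d, n = r + 1 + d := ⟨n - (r+1), by omega⟩
    rw [gb, gb, gb, if_pos (by omega), if_pos (by omega), if_pos (by omega)]
    rw [(by omega : r + 1 + d + 1 - (r + 1) = d + 1), (by omega : r + 1 + d - (r + 1) = d),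
      (by omega : r + 1 + d - r = d + 1)]
    rw [Ap_succ (r+1+d), Ap_succ d, Ap_succ r]
    have h1 := Ap_ne hx (r+1+d); have h2 := Ap_ne hx d; have h3 := Ap_ne hx r
    have h4 := fac_ne hx (r+1+d); have h5 := fac_ne hx d; have h6 := fac_ne hx r
    field_simp
    ring

theorem P2 (hx : ‖x‖ < 1) (n r : ℕ) :
    gb x (n+1) (r+1) = x ^ (2*(r+1)) * gb x n (r+1) + gb x n r := by
  rcases lt_or_ge n (r+1) with h | h
  · rcases eq_or_lt_of_le (Nat.lt_succ_iff.mp h) with rfl | h2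
    · simp [gb_self hx, gb_of_gt (Nat.lt_succ_self n)]
    · rw [gb_of_gt h2, gb_of_gt (by omega : n < r + 1), gb_of_gt (by omega : n + 1 < r + 1)]
      ring
  · obtain ⟨d, rfl⟩ : ∃ d, n = r + 1 + d := ⟨n - (r+1), by omega⟩
    rw [gb, gb, gb, if_pos (by omega), if_pos (by omega), if_pos (by omega)]
    rw [(by omega : r + 1 + d + 1 - (r + 1) = d + 1), (by omega : r + 1 + d - (r + 1) = d),
      (by omega : r + 1 + d - r = d + 1)]
    rw [Ap_succ (r+1+d), Ap_succ d, Ap_succ r]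
    have h1 := Ap_ne hx (r+1+d); have h2 := Ap_ne hx d; have h3 := Ap_ne hx r
    have h4 := fac_ne hx (r+1+d); have h5 := fac_ne hx d; have h6 := fac_ne hx r
    field_simp
    ring

variable (x) in
noncomputable def bb (N : ℕ) (m : ℤ) : ℂ :=
  if m.natAbs ≤ N then x ^ (m.natAbs ^ 2) * gb x (2*N) (N + m).toNat else 0

theorem bb_eq {N : ℕ} {m : ℤ} (h : m.natAbs ≤ N) :
    bb x N m = x ^ (m.natAbs ^ 2) * gb x (2*N) (N + m).toNat := if_pos h

theorem bb_eq_zero {N : ℕ} {m : ℤ} (h : N < m.natAbs) : bb x N m = 0 := if_neg (by omega)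


theorem bb_rec (hx : ‖x‖ < 1) (N : ℕ) (m : ℤ) :
    bb x (N+1) m = (1 + x^(4*N+2)) * bb x N m
      + x^(2*N+1) * (bb x N (m-1) + bb x N (m+1)) := by
  rcases lt_or_ge (N+1) m.natAbs with hC | hAB
  · rw [bb_eq_zero (N := N+1) (m := m) (by omega), bb_eq_zero (N := N) (m := m) (by omega),
      bb_eq_zero (N := N) (m := m-1) (by omega), bb_eq_zero (N := N) (m := m+1) (by omega)]
    ring
  rcases eq_or_lt_of_le hAB with hB | hA
  · -- |m| = N+1
    rcases Int.natAbs_eq m with hm | hm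
    · -- m = N+1
      have hm' : m = (N:ℤ) + 1 := by omega
      subst hm'
      rw [bb_eq (N := N+1) (m := (N:ℤ)+1) (by omega),
        bb_eq_zero (N := N) (m := (N:ℤ)+1) (by omega),
        bb_eq_zero (N := N) (m := (N:ℤ)+1+1) (by omega),
        bb_eq (N := N) (m := (N:ℤ)+1-1) (by omega)]
      rw [(by omega : (((N+1:ℕ):ℤ) + ((N:ℤ)+1)).toNat = 2*(N+1)),
        (by omega : ((N:ℤ) + ((N:ℤ)+1-1)).toNat = 2*N),
        gb_self hx, gb_self hx,
        (by omega : ((N:ℤ)+1).natAbs = N + 1), (by omega : ((N:ℤ)+1-1).natAbs = N)]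
      ring
    · -- m = -(N+1)
      have hm' : m = -((N:ℤ) + 1) := by omega
      subst hm'
      rw [bb_eq (N := N+1) (m := -((N:ℤ)+1)) (by omega),
        bb_eq_zero (N := N) (m := -((N:ℤ)+1)) (by omega),
        bb_eq_zero (N := N) (m := -((N:ℤ)+1)-1) (by omega),
        bb_eq (N := N) (m := -((N:ℤ)+1)+1) (by omega)]
      rw [(by omega : (((N+1:ℕ):ℤ) + -((N:ℤ)+1)).toNat = 0),
        (by omega : ((N:ℤ) + (-((N:ℤ)+1)+1)).toNat = 0),
        gb_zero hx, gb_zero hx,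
        (by omega : (-((N:ℤ)+1)).natAbs = N + 1), (by omega : (-((N:ℤ)+1)+1).natAbs = N)]
      ring
  -- now |m| ≤ N
  have hA' : m.natAbs ≤ N := by omega
  rcases eq_or_lt_of_le (by omega : -(N:ℤ) ≤ m) with hm0 | hm1
  · -- m = -N
    have hm' : m = -(N:ℤ) := hm0.symm
    subst hm'
    rcases Nat.eq_zero_or_pos N with rfl | hNpos
    · -- N = 0, m = 0
      rw [bb_eq (N := 1) (m := -((0:ℕ):ℤ)) (by omega),
        bb_eq (N := 0) (m := -((0:ℕ):ℤ)) (by omega),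
        bb_eq_zero (N := 0) (m := -((0:ℕ):ℤ)-1) (by omega),
        bb_eq_zero (N := 0) (m := -((0:ℕ):ℤ)+1) (by omega)]
      rw [(by omega : (((1:ℕ):ℤ) + -((0:ℕ):ℤ)).toNat = 1),
        (by omega : (((0:ℕ):ℤ) + -((0:ℕ):ℤ)).toNat = 0),
        (by omega : (-((0:ℕ):ℤ)).natAbs = 0), gb_zero hx]
      rw [gb, if_pos (by omega)]
      rw [(by norm_num : 2*1 = 1 + 1), Ap_succ 1, Ap_succ 0, Ap_zero]
      have h1 := fac_ne hx 0; have h2 := fac_ne hx 1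
      field_simp
      ring
    · -- N ≥ 1, m = -N
      obtain ⟨N', rfl⟩ : ∃ N', N = N' + 1 := ⟨N - 1, by omega⟩
      rw [bb_eq (N := N'+1+1) (m := -((N'+1:ℕ):ℤ)) (by omega),
        bb_eq (N := N'+1) (m := -((N'+1:ℕ):ℤ)) (by omega),
        bb_eq_zero (N := N'+1) (m := -((N'+1:ℕ):ℤ)-1) (by omega),
        bb_eq (N := N'+1) (m := -((N'+1:ℕ):ℤ)+1) (by omega)]
      rw [(by omega : (((N'+1+1:ℕ):ℤ) + -((N'+1:ℕ):ℤ)).toNat = 1),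
        (by omega : (((N'+1:ℕ):ℤ) + -((N'+1:ℕ):ℤ)).toNat = 0),
        (by omega : (((N'+1:ℕ):ℤ) + (-((N'+1:ℕ):ℤ)+1)).toNat = 1),
        gb_zero hx,
        (by omega : (-((N'+1:ℕ):ℤ)).natAbs = N' + 1),
        (by omega : (-((N'+1:ℕ):ℤ)+1).natAbs = N')]
      have g1 := P1 hx (2*(N'+1)+1) 0
      have g2 := P2 hx (2*(N'+1)) 0
      rw [gb_zero hx] at g1 g2
      rw [(by omega : 2*(N'+1)+1-0 = 2*(N'+1)+1)] at g1
      rw [(by omega : 2*(N'+1+1) = 2*(N'+1)+1+1), g1, g2]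
      ring
  · -- -N < m ≤ N : generic case
    obtain ⟨k', hk⟩ : ∃ k', ((N:ℤ) + m).toNat = k' + 1 := ⟨((N:ℤ)+m).toNat - 1, by omega⟩
    have hkN : k' + 1 ≤ 2*N := by omega
    have g1 := P1 hx (2*N+1) (k'+1)
    have g2 := P2 hx (2*N) (k'+1)
    have g3 := P2 hx (2*N) k'
    rw [(by omega : 2*N+1 - (k'+1) = 2*N - k')] at g1
    rw [bb_eq (N := N+1) (m := m) (by omega), bb_eq (N := N) (m := m) (by omega),
      bb_eq (N := N) (m := m-1) (by omega)]
    rw [(by omega : (((N+1:ℕ):ℤ) + m).toNat = k' + 1 + 1), hk,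
      (by omega : ((N:ℤ) + (m-1)).toNat = k'), (by omega : 2*(N+1) = 2*N+1+1),
      g1, g2, g3]
    have ea : ((((m-1).natAbs^2 : ℕ)) : ℤ) = (((m.natAbs^2 : ℕ)) : ℤ) - 2*m + 1 := by
      have e1 := Int.natAbs_sq m; have e2 := Int.natAbs_sq (m-1); push_cast at *; nlinarith
    have eq2 : m.natAbs^2 + 2*(2*N-k') = (m-1).natAbs^2 + (2*N+1) := by omega
    have eq3 : 2*(2*N-k') + 2*(k'+1) = 4*N + 2 := by omega
    rcases eq_or_lt_of_le (by omega : m ≤ (N:ℤ)) with hmN | hmN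
    · -- m = N : top boundary
      rw [bb_eq_zero (N := N) (m := m+1) (by omega),
        gb_of_gt (by omega : 2*N < k'+1+1)]
      calc x ^ m.natAbs^2 * (x ^ (2 * (k' + 1 + 1)) * 0 +
              gb x (2 * N) (k' + 1) +
              x ^ (2 * (2 * N - k')) *
                (x ^ (2 * (k' + 1)) * gb x (2 * N) (k' + 1) + gb x (2 * N) k'))
          = (1 + x ^ (2*(2*N-k') + 2*(k'+1))) * (x ^ m.natAbs^2 * gb x (2 * N) (k' + 1))
            + x ^ (m.natAbs^2 + 2*(2*N-k')) * gb x (2 * N) k' := by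
            rw [pow_add, pow_add]; ring
        _ = _ := by
            rw [eq2, eq3, pow_add]
            ring
    · -- m < N
      rw [bb_eq (N := N) (m := m+1) (by omega),
        (by omega : ((N:ℤ) + (m+1)).toNat = k' + 1 + 1)]
      have eb : ((((m+1).natAbs^2 : ℕ)) : ℤ) = (((m.natAbs^2 : ℕ)) : ℤ) + 2*m + 1 := by
        have e1 := Int.natAbs_sq m; have e2 := Int.natAbs_sq (m+1); push_cast at *; nlinarith
      have eq1 : m.natAbs^2 + 2*(k'+1+1) = (m+1).natAbs^2 + (2*N+1) := by omega
      calc x ^ m.natAbs^2 * (x ^ (2 * (k' + 1 + 1)) * gb x (2 * N) (k' + 1 + 1) +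
              gb x (2 * N) (k' + 1) +
              x ^ (2 * (2 * N - k')) *
                (x ^ (2 * (k' + 1)) * gb x (2 * N) (k' + 1) + gb x (2 * N) k'))
          = x ^ (m.natAbs^2 + 2*(k'+1+1)) * gb x (2 * N) (k' + 1 + 1)
            + (1 + x ^ (2*(2*N-k') + 2*(k'+1))) * (x ^ m.natAbs^2 * gb x (2 * N) (k' + 1))
            + x ^ (m.natAbs^2 + 2*(2*N-k')) * gb x (2 * N) k' := by
            rw [pow_add, pow_add, pow_add]; ring
        _ = _ := by
            rw [eq1, eq2, eq3, pow_add, pow_add]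
            ring


theorem bb_summable (N : ℕ) : Summable (bb x N) :=
  summable_of_ne_finset_zero (s := Finset.Icc (-(N:ℤ)) N)
    (fun m hm => bb_eq_zero (by simp [Finset.mem_Icc] at hm; omega))

theorem bb_shift_summable (N : ℕ) (a : ℤ) : Summable (fun m : ℤ => bb x N (m + a)) :=
  ((Equiv.addRight a).summable_iff (f := bb x N)).mpr (bb_summable N)

theorem tsum_bb_succ (hx : ‖x‖ < 1) (N : ℕ) :
    ∑' m : ℤ, bb x (N+1) m = (1 + x^(2*N+1))^2 * ∑' m : ℤ, bb x N m := by
  have h0 : Summable (bb x N) := bb_summable N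
  have h1 : Summable (fun m : ℤ => bb x N (m - 1)) := by
    simpa [sub_eq_add_neg] using bb_shift_summable (x := x) N (-1)
  have h2 : Summable (fun m : ℤ => bb x N (m + 1)) := bb_shift_summable N 1
  have e1 : ∑' m : ℤ, bb x N (m - 1) = ∑' m : ℤ, bb x N m :=
    (Equiv.subRight (1:ℤ)).tsum_eq (bb x N)
  have e2 : ∑' m : ℤ, bb x N (m + 1) = ∑' m : ℤ, bb x N m :=
    (Equiv.addRight (1:ℤ)).tsum_eq (bb x N)
  rw [tsum_congr (fun m => bb_rec hx N m),
    Summable.tsum_add (h0.mul_left _) ((h1.add h2).mul_left _), tsum_mul_left, tsum_mul_left,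
    Summable.tsum_add h1 h2, e1, e2]
  ring

theorem tsum_bb_zero (hx : ‖x‖ < 1) : ∑' m : ℤ, bb x 0 m = 1 := by
  rw [tsum_eq_single 0 (fun m hm => bb_eq_zero (by omega))]
  rw [bb_eq (by omega)]
  norm_num [gb_zero hx]

theorem tsum_bb (hx : ‖x‖ < 1) (N : ℕ) :
    ∑' m : ℤ, bb x N m = ∏ j ∈ Finset.range N, (1 + x^(2*j+1))^2 := by
  induction N with
  | zero => simpa using tsum_bb_zero hx
  | succ n ih => rw [tsum_bb_succ hx n, ih, Finset.prod_range_succ]; ring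

theorem finite_id (hx : ‖x‖ < 1) (N : ℕ) :
    ∏ j ∈ Finset.range N, ((1 - x^(2*j+2)) * (1 + x^(2*j+1))^2)
      = ∑' m : ℤ, Ap x N * bb x N m := by
  rw [tsum_mul_left, tsum_bb hx N, Finset.prod_mul_distrib]
  rfl

theorem gb_symm {n r : ℕ} (h : r ≤ n) : gb x n r = gb x n (n - r) := by
  rw [gb, gb, if_pos h, if_pos (by omega), (by omega : n - (n - r) = r), mul_comm]

theorem bb_neg (N : ℕ) (m : ℤ) : bb x N (-m) = bb x N m := by
  rcases le_or_gt m.natAbs N with h | h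
  · rw [bb_eq (by omega), bb_eq (by omega), Int.natAbs_neg]
    congr 1
    rw [gb_symm (n := 2*N) (r := ((N:ℤ) + -m).toNat) (by omega)]
    congr 1
    omega
  · rw [bb_eq_zero (by omega), bb_eq_zero (by omega)]


/-! ### Analytic lemmas -/

theorem summable_norm_pow (hx : ‖x‖ < 1) {c : ℕ → ℕ} (hc : ∀ n, n ≤ c n) :
    Summable (fun n : ℕ => ‖x‖ ^ (c n)) := by
  refine (summable_geometric_of_lt_one (norm_nonneg x) hx).of_nonneg_of_le
    (fun n => pow_nonneg (norm_nonneg x) _) (fun n => ?_)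
  exact pow_le_pow_of_le_one (norm_nonneg x) hx.le (hc n)

theorem summable_pow (hx : ‖x‖ < 1) {c : ℕ → ℕ} (hc : ∀ n, n ≤ c n) :
    Summable (fun n : ℕ => x ^ (c n)) := by
  refine Summable.of_norm ?_
  simpa [norm_pow] using summable_norm_pow hx hc

theorem mult_one_add {u : ℕ → ℂ} (hu : Summable u) (h1 : ∀ n, 1 + u n ≠ 0) :
    Multipliable (fun n => 1 + u n) ∧ (∏' n, (1 + u n)) ≠ 0 := by
  have hlog : Summable (fun n => Complex.log (1 + u n)) := by
    refine Summable.of_norm_bounded_eventually_nat (g := fun n => 3/2 * ‖u n‖)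
      (hu.norm.mul_left _) ?_
    have h0 : Tendsto u atTop (𝓝 0) := hu.tendsto_atTop_zero
    have : ∀ᶠ n in atTop, ‖u n‖ ≤ 1/2 := by
      have := h0.norm.eventually_lt_const (show ‖(0:ℂ)‖ < 1/2 by norm_num)
      exact this.mono fun n hn => hn.le
    filter_upwards [this] with n hn
    exact Complex.norm_log_one_add_half_le_self hn
  constructor
  · exact Complex.multipliable_of_summable_log hlog
  · have := Complex.cexp_tsum_eq_tprod (f := fun n => 1 + u n) (fun n => h1 n) hlog
    rw [← this]
    exact Complex.exp_ne_zero _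

theorem fac_ne' (hx : ‖x‖ < 1) (j : ℕ) : (1 : ℂ) + x ^ (2*j+1) ≠ 0 := by
  have h : ‖x ^ (2*j+1)‖ < 1 := by
    rw [norm_pow]; exact pow_lt_one₀ (norm_nonneg x) hx (by omega)
  intro h0
  have : x ^ (2*j+1) = -1 := by linear_combination h0
  rw [this] at h; simp at h

theorem mult_sub (hx : ‖x‖ < 1) :
    Multipliable (fun n : ℕ => 1 - x ^ (2*n+2)) ∧ (∏' n : ℕ, (1 - x ^ (2*n+2))) ≠ 0 := by
  have he : (fun n : ℕ => 1 - x ^ (2*n+2)) = fun n => 1 + (-(x ^ (2*n+2))) := by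
    funext n; ring
  rw [he]
  exact mult_one_add ((summable_pow hx (fun n => by omega)).neg)
    (fun n => by rw [← sub_eq_add_neg]; exact fac_ne hx n)

theorem mult_add_odd (hx : ‖x‖ < 1) :
    Multipliable (fun n : ℕ => 1 + x ^ (2*n+1)) :=
  (mult_one_add (summable_pow hx (fun n => by omega)) (fun n => fac_ne' hx n)).1

theorem mult_total (hx : ‖x‖ < 1) :
    Multipliable (fun n : ℕ => (1 - x ^ (2*n+2)) * (1 + x ^ (2*n+1))^2) := by
  have h1 := (mult_sub hx).1
  have h2 := mult_add_odd hx
  have : (fun n : ℕ => (1 - x ^ (2*n+2)) * (1 + x ^ (2*n+1))^2)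
      = fun n => (1 - x ^ (2*n+2)) * ((1 + x ^ (2*n+1)) * (1 + x ^ (2*n+1))) := by
    funext n; ring
  rw [this]
  exact h1.mul (h2.mul h2)


theorem Ap_split {a b : ℕ} (h : a ≤ b) :
    Ap x b = Ap x a * ∏ j ∈ Finset.Ico a b, (1 - x ^ (2*j+2)) := by
  rw [Ap, Ap, Finset.range_eq_Ico, Finset.range_eq_Ico, ← Finset.prod_Ico_consecutive _ (Nat.zero_le a) h]

theorem Ap_mul_bb (hx : ‖x‖ < 1) {N : ℕ} {m : ℤ} (hm0 : 0 ≤ m) (hmN : m.natAbs ≤ N) :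
    Ap x N * bb x N m = x ^ (m.natAbs^2)
      * (∏ j ∈ Finset.Ico (((N:ℤ)+m).toNat) (2*N), (1 - x ^ (2*j+2)))
      * (∏ j ∈ Finset.Ico (((N:ℤ)-m).toNat) N, (1 - x ^ (2*j+2))) := by
  rw [bb_eq hmN, gb, if_pos (by omega : ((N:ℤ)+m).toNat ≤ 2*N)]
  rw [(by omega : 2*N - ((N:ℤ)+m).toNat = ((N:ℤ)-m).toNat)]
  rw [Ap_split (x := x) (by omega : ((N:ℤ)+m).toNat ≤ 2*N),
    Ap_split (x := x) (by omega : ((N:ℤ)-m).toNat ≤ N)]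
  have n1 := Ap_ne hx (((N:ℤ)+m).toNat); have n2 := Ap_ne hx (((N:ℤ)-m).toNat)
  field_simp

theorem prod_norm_bound (hx : ‖x‖ < 1) (s : Finset ℕ) :
    ‖∏ j ∈ s, ((1:ℂ) - x ^ (2*j+2))‖ ≤ Real.exp (∑' j : ℕ, ‖x‖^(2*j+2)) := by
  rw [norm_prod]
  calc ∏ j ∈ s, ‖(1:ℂ) - x ^ (2*j+2)‖ ≤ ∏ j ∈ s, Real.exp (‖x‖^(2*j+2)) := by
        refine Finset.prod_le_prod (fun j _ => norm_nonneg _) (fun j _ => ?_)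
        calc ‖(1:ℂ) - x^(2*j+2)‖ ≤ ‖(1:ℂ)‖ + ‖x^(2*j+2)‖ := norm_sub_le _ _
          _ = ‖x‖^(2*j+2) + 1 := by rw [norm_one, norm_pow]; ring
          _ ≤ Real.exp _ := Real.add_one_le_exp _
    _ = Real.exp (∑ j ∈ s, ‖x‖^(2*j+2)) := (Real.exp_sum s _).symm
    _ ≤ _ := Real.exp_le_exp.mpr (Summable.sum_le_tsum s (fun j _ => pow_nonneg (norm_nonneg _) _)
            (summable_norm_pow hx (fun n => by omega)))

theorem bound_bb (hx : ‖x‖ < 1) (N : ℕ) (m : ℤ) :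
    ‖Ap x N * bb x N m‖ ≤ Real.exp (∑' j : ℕ, ‖x‖^(2*j+2)) * Real.exp (∑' j : ℕ, ‖x‖^(2*j+2))
      * ‖x‖^(m.natAbs^2) := by
  set E := ∑' j : ℕ, ‖x‖^(2*j+2) with hE
  suffices h : ∀ m : ℤ, 0 ≤ m →
      ‖Ap x N * bb x N m‖ ≤ Real.exp E * Real.exp E * ‖x‖^(m.natAbs^2) by
    rcases le_total 0 m with hm | hm
    · exact h m hm
    · have := h (-m) (by omega)
      rwa [bb_neg, Int.natAbs_neg] at this
  intro m hm
  rcases le_or_gt m.natAbs N with h1 | h1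
  · rw [Ap_mul_bb hx hm h1, norm_mul, norm_mul, norm_pow]
    have b1 := prod_norm_bound hx (s := Finset.Ico (((N:ℤ)+m).toNat) (2*N))
    have b2 := prod_norm_bound hx (s := Finset.Ico (((N:ℤ)-m).toNat) N)
    calc ‖x‖^(m.natAbs^2) * ‖∏ j ∈ Finset.Ico (((N:ℤ)+m).toNat) (2*N), ((1:ℂ) - x ^ (2*j+2))‖
          * ‖∏ j ∈ Finset.Ico (((N:ℤ)-m).toNat) N, ((1:ℂ) - x ^ (2*j+2))‖
        ≤ ‖x‖^(m.natAbs^2) * Real.exp E * Real.exp E := by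
          gcongr
      _ = Real.exp E * Real.exp E * ‖x‖^(m.natAbs^2) := by ring
  · rw [bb_eq_zero h1, mul_zero, norm_zero]
    positivity

theorem tendsto_Ap (hx : ‖x‖ < 1) :
    Tendsto (fun N => Ap x N) atTop (𝓝 (∏' n : ℕ, (1 - x^(2*n+2)))) :=
  Multipliable.tendsto_prod_tprod_nat (mult_sub hx).1

theorem tendsto_pt (hx : ‖x‖ < 1) (m : ℤ) :
    Tendsto (fun N => Ap x N * bb x N m) atTop (𝓝 (x ^ (m.natAbs^2))) := by
  set L := ∏' n : ℕ, (1 - x^(2*n+2)) with hLdef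
  have hL : L * L ≠ 0 := mul_ne_zero (mult_sub hx).2 (mult_sub hx).2
  have hAp := tendsto_Ap hx
  have t2 : Tendsto (fun N : ℕ => 2*N) atTop atTop :=
    tendsto_atTop_atTop.mpr fun b => ⟨b, fun a ha => by omega⟩
  have tk : Tendsto (fun N : ℕ => ((N:ℤ)+m).toNat) atTop atTop :=
    tendsto_atTop_atTop.mpr fun b => ⟨b + m.natAbs, fun a ha => by omega⟩
  have tk2 : Tendsto (fun N : ℕ => ((N:ℤ)-m).toNat) atTop atTop :=
    tendsto_atTop_atTop.mpr fun b => ⟨b + m.natAbs, fun a ha => by omega⟩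
  have main : Tendsto (fun N => x ^ (m.natAbs^2) *
      (Ap x (2*N) * Ap x N / (Ap x (((N:ℤ)+m).toNat) * Ap x (((N:ℤ)-m).toNat))))
      atTop (𝓝 (x ^ (m.natAbs^2) * (L * L / (L * L)))) :=
    tendsto_const_nhds.mul (((hAp.comp t2).mul hAp).div
      ((hAp.comp tk).mul (hAp.comp tk2)) hL)
  rw [div_self hL, mul_one] at main
  apply Tendsto.congr' _ main
  filter_upwards [eventually_ge_atTop m.natAbs] with N hN
  rw [bb_eq hN, gb, if_pos (by omega : ((N:ℤ)+m).toNat ≤ 2*N),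
    (by omega : 2*N - ((N:ℤ)+m).toNat = ((N:ℤ)-m).toNat)]
  ring

theorem prod_eq (hx : ‖x‖ < 1) :
    ∏' n : ℕ, ((1 - x^(2*n+2)) * (1 + x^(2*n+1))^2) = ∑' m : ℤ, x^(m.natAbs^2) := by
  have hb1 : Summable (fun n : ℕ => ‖x‖ ^ (n^2)) :=
    summable_norm_pow hx (fun n => Nat.le_self_pow two_ne_zero n)
  have hb2 : Summable (fun n : ℕ => ‖x‖ ^ ((n+1)^2)) :=
    summable_norm_pow hx (fun n => by nlinarith)
  have hsum_bound : Summable (fun m : ℤ =>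
      Real.exp (∑' j : ℕ, ‖x‖^(2*j+2)) * Real.exp (∑' j : ℕ, ‖x‖^(2*j+2)) * ‖x‖^(m.natAbs^2)) := by
    apply Summable.mul_left
    apply Summable.of_nat_of_neg_add_one
    · simpa using hb1
    · refine hb2.congr fun n => ?_
      have h : (-((n:ℤ)+1)).natAbs = n + 1 := by omega
      rw [h]
  have hdom := tendsto_tsum_of_dominated_convergence (𝓕 := atTop)
    (f := fun N (m : ℤ) => Ap x N * bb x N m) hsum_bound (fun m => tendsto_pt hx m)
    (Eventually.of_forall fun N m => bound_bb hx N m)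
  have hprod := Multipliable.tendsto_prod_tprod_nat (mult_total hx)
  have hfin : Tendsto (fun N => ∑' m : ℤ, Ap x N * bb x N m) atTop
      (𝓝 (∏' n : ℕ, ((1 - x^(2*n+2)) * (1 + x^(2*n+1))^2))) :=
    hprod.congr (fun N => finite_id hx N)
  exact tendsto_nhds_unique hfin hdom


theorem norm_summand (hx : ‖x‖ < 1) :
    Summable (fun n : ℕ => ‖x ^ (n ^ 2) * (1 - x ^ (2 * n + 2)) ^ 2‖) := by
  refine Summable.of_nonneg_of_le (fun n => norm_nonneg _) (fun n => ?_)
    (((summable_geometric_of_lt_one (norm_nonneg x) hx)).mul_left 4)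
  rw [norm_mul, norm_pow, norm_pow]
  have h1 : ‖x‖ ^ (n^2) ≤ ‖x‖ ^ n :=
    pow_le_pow_of_le_one (norm_nonneg x) hx.le (Nat.le_self_pow two_ne_zero n)
  have h2 : ‖(1:ℂ) - x ^ (2*n+2)‖ ≤ 2 := by
    calc ‖(1:ℂ) - x ^ (2*n+2)‖ ≤ ‖(1:ℂ)‖ + ‖x ^ (2*n+2)‖ := norm_sub_le _ _
      _ ≤ 1 + 1 := by
          rw [norm_one, norm_pow]
          have : ‖x‖ ^ (2*n+2) ≤ 1 := pow_le_one₀ (norm_nonneg x) hx.le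
          linarith
      _ = 2 := by norm_num
  calc ‖x‖ ^ (n^2) * ‖(1:ℂ) - x ^ (2*n+2)‖ ^ 2 ≤ ‖x‖ ^ n * 2^2 := by
        gcongr
    _ = 4 * ‖x‖ ^ n := by ring

theorem final_eq (hx : ‖x‖ < 1) :
    (1 - x) * ∏' m : ℕ, (1 - x ^ (2 * m + 2)) * (1 + x ^ (2 * m + 1)) ^ 2
      = ∑' n : ℕ, x ^ (n ^ 2) * (1 - x ^ (2 * n + 2)) ^ 2 := by
  have hs0 : Summable (fun n : ℕ => x ^ (n^2)) :=
    summable_pow hx (fun n => Nat.le_self_pow two_ne_zero n)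
  have hs1 : Summable (fun n : ℕ => x ^ ((n+1)^2)) := summable_pow hx (fun n => by nlinarith)
  have hs2 : Summable (fun n : ℕ => x ^ ((n+2)^2)) := summable_pow hx (fun n => by nlinarith)
  have hsplit : ∑' m : ℤ, x ^ (m.natAbs^2) = (∑' n : ℕ, x ^ (n^2)) + ∑' n : ℕ, x ^ ((n+1)^2) := by
    rw [tsum_of_nat_of_neg_add_one (hs0.congr fun n => by simp)
      (hs1.congr fun n => by
        have h : (-((n:ℤ)+1)).natAbs = n + 1 := by omega
        rw [h])]
    congr 1
  have e0 : ∑' n : ℕ, x ^ (n^2) = 1 + ∑' n : ℕ, x ^ ((n+1)^2) := by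
    rw [Summable.tsum_eq_zero_add hs0]
    norm_num
  have e1 : ∑' n : ℕ, x ^ ((n+1)^2) = x + ∑' n : ℕ, x ^ ((n+2)^2) := by
    rw [Summable.tsum_eq_zero_add hs1]
    norm_num
  have hexp : ∀ n : ℕ, x ^ (n ^ 2) * (1 - x ^ (2 * n + 2)) ^ 2
      = x ^ (n^2) - 2*(x * x ^ ((n+1)^2)) + x ^ ((n+2)^2) := fun n => by ring
  have hsummand2 : Summable (fun n : ℕ => x ^ (n^2) - 2*(x * x ^ ((n+1)^2))) :=
    hs0.sub ((hs1.mul_left x).mul_left 2)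
  rw [show (fun n : ℕ => x ^ (n ^ 2) * (1 - x ^ (2 * n + 2)) ^ 2)
      = fun n => x ^ (n^2) - 2*(x * x ^ ((n+1)^2)) + x ^ ((n+2)^2) from funext hexp]
  rw [Summable.tsum_add hsummand2 hs2, Summable.tsum_sub hs0 ((hs1.mul_left x).mul_left 2),
    tsum_mul_left, tsum_mul_left, prod_eq hx, hsplit]
  linear_combination (-x) * e0 + e1

end Ferm



/-- For `x : ℂ` with `‖x‖ < 1`,
`(1 - x) · ∏_{m=1}^∞ (1 - x^{2m})(1 + x^{2m-1})² = Σ_{n=0}^∞ x^{n²}(1 - x^{2n+2})²`,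
where the infinite product is multipliable and the series is absolutely convergent.
(The product over `m ≥ 1` is reindexed by `m ↦ m + 1` with `m : ℕ`.) -/
theorem fermionic_product_eq_telescoping_sum (x : ℂ) (hx : ‖x‖ < 1) :
    Multipliable (fun m : ℕ => (1 - x ^ (2 * m + 2)) * (1 + x ^ (2 * m + 1)) ^ 2) ∧
    Summable (fun n : ℕ => ‖x ^ (n ^ 2) * (1 - x ^ (2 * n + 2)) ^ 2‖) ∧
    (1 - x) * ∏' m : ℕ, (1 - x ^ (2 * m + 2)) * (1 + x ^ (2 * m + 1)) ^ 2
      = ∑' n : ℕ, x ^ (n ^ 2) * (1 - x ^ (2 * n + 2)) ^ 2 := by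
  exact ⟨Ferm.mult_total hx, Ferm.norm_summand hx, Ferm.final_eq hx⟩
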